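/- Define sequences T⁽¹⁾, T⁽²⁾ : ℕ → ℤ by T⁽¹⁾₀ = 1, T⁽²⁾₀ = 0, T⁽¹⁾₁ = 0, T⁽²⁾₁ = 2 (i.e. (T⁽¹⁾₁,T⁽²⁾₁)ᵀ = R'·(1,0)ᵀ with R' = [[0,1],[2,2]]), and Tⱼ⁽ⁱ⁾ = 2Tⱼ₋₁⁽ⁱ⁾ + 2Tⱼ₋₂⁽ⁱ⁾ for j ≥ 2. Then T⁽¹⁾ⱼ / T⁽²⁾ⱼ tends to (-1+√3)/2 as j → ∞. -/

import Mathlib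

open Filter

theorem ratio_tendsto_other_root
    (T1 T2 : ℕ → ℤ)
    (h10 : T1 0 = 1) (h11 : T1 1 = 0) (h20 : T2 0 = 0) (h21 : T2 1 = 2)
    (hrec1 : ∀ j, T1 (j + 2) = 2 * T1 (j + 1) + 2 * T1 j)
    (hrec2 : ∀ j, T2 (j + 2) = 2 * T2 (j + 1) + 2 * T2 j) :
    Tendsto (fun j => (T1 j : ℝ) / (T2 j)) atTop
      (nhds ((-1 + Real.sqrt 3) / 2)) := by
  have s3 : Real.sqrt 3 ^ 2 = 3 := Real.sq_sqrt (by norm_num)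
  have s3pos : (0:ℝ) < Real.sqrt 3 := Real.sqrt_pos.mpr (by norm_num)
  have h1lt : (1:ℝ) < Real.sqrt 3 := by nlinarith
  set r : ℝ := (-1 + Real.sqrt 3) / 2 with hr
  set α : ℝ := 1 + Real.sqrt 3 with hα
  set β : ℝ := 1 - Real.sqrt 3 with hβ
  have hαpos : 0 < α := by rw [hα]; linarith
  have habsβ : |β| = Real.sqrt 3 - 1 := by
    rw [hβ, abs_of_neg (by linarith)]; ring
  have hβltα : |β| < α := by rw [habsβ, hα]; linarith
  have hrecα : α ^ 2 = 2 * α + 2 := by rw [hα]; nlinarith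
  have hrecβ : β ^ 2 = 2 * β + 2 := by rw [hβ]; nlinarith
  have key1 : ∀ j, (T1 j : ℝ) = r * T2 j + β ^ j := by
    intro j
    induction j using Nat.strong_induction_on with
    | _ j ih =>
      match j with
      | 0 => simp [h10, h20]
      | 1 =>
        simp only [h11, h21, pow_one]
        push_cast
        rw [hr, hβ]; ring
      | (j+2) =>
        have e1 := ih (j+1) (by omega)
        have e2 := ih j (by omega)
        have hb : β ^ (j+2) = 2 * β ^ (j+1) + 2 * β ^ j := by
          have h : β ^ (j+2) = β ^ 2 * β ^ j := by ring
          rw [h, hrecβ]; ring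
        rw [hrec1 j, hrec2 j]
        push_cast
        rw [e1, e2, hb]; ring
  have key2 : ∀ j, (T2 j : ℝ) = (α ^ j - β ^ j) / Real.sqrt 3 := by
    intro j
    induction j using Nat.strong_induction_on with
    | _ j ih =>
      match j with
      | 0 => simp [h20]
      | 1 =>
        simp only [h21, pow_one]
        push_cast
        rw [hα, hβ]
        field_simp
        ring
      | (j+2) =>
        have e1 := ih (j+1) (by omega)
        have e2 := ih j (by omega)
        have ha : α ^ (j+2) = 2 * α ^ (j+1) + 2 * α ^ j := by
          have h : α ^ (j+2) = α ^ 2 * α ^ j := by ring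
          rw [h, hrecα]; ring
        have hb : β ^ (j+2) = 2 * β ^ (j+1) + 2 * β ^ j := by
          have h : β ^ (j+2) = β ^ 2 * β ^ j := by ring
          rw [h, hrecβ]; ring
        rw [hrec2 j]
        push_cast
        rw [e1, e2, ha, hb]; ring
  have hdiff : ∀ j : ℕ, 1 ≤ j → β ^ j < α ^ j := by
    intro j hj
    calc β ^ j ≤ |β ^ j| := le_abs_self _
      _ = |β| ^ j := abs_pow β j
      _ < α ^ j := pow_lt_pow_left₀ hβltα (abs_nonneg β) (by omega)
  set q : ℝ := β / α with hq
  have habsq : |q| < 1 := by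
    rw [hq, abs_div, abs_of_pos hαpos, div_lt_one hαpos]
    exact hβltα
  have hq0 : Tendsto (fun j : ℕ => q ^ j) atTop (nhds 0) :=
    tendsto_pow_atTop_nhds_zero_of_abs_lt_one habsq
  have hlim : Tendsto (fun j : ℕ => r + Real.sqrt 3 * q ^ j / (1 - q ^ j))
      atTop (nhds r) := by
    have h1 : Tendsto (fun j : ℕ => Real.sqrt 3 * q ^ j / (1 - q ^ j)) atTop
        (nhds (Real.sqrt 3 * 0 / (1 - 0))) :=
      (tendsto_const_nhds.mul hq0).div (tendsto_const_nhds.sub hq0) (by norm_num)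
    have h2 : Real.sqrt 3 * 0 / (1 - 0) = 0 := by ring
    rw [h2] at h1
    have := tendsto_const_nhds.add h1 (f := fun j : ℕ => r)
    simpa using this
  apply hlim.congr'
  filter_upwards [eventually_ge_atTop 1] with j hj
  have hA : 0 < α ^ j := pow_pos hαpos j
  have hAB : β ^ j < α ^ j := hdiff j hj
  rw [key1 j, key2 j, hq, div_pow]
  have hs : Real.sqrt 3 ≠ 0 := ne_of_gt s3pos
  have hA' : α ^ j ≠ 0 := ne_of_gt hA
  have hAB' : α ^ j - β ^ j ≠ 0 := by linarith
  field_simp
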